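/- arXiv:2506.02635 — 3 statements merged into one kernel-verified Lean document; each statement's English description precedes it below -/
import Mathlib

section
/- Let E be a finite-dimensional real inner product space, X ⊆ E a compact convex set of diameter at most D > 0, and f : E → ℝ a convex differentiable function that is L-smooth on X (L > 0), with f* = min_{y∈X} f(y). Let T ≥ 1 and let (x_t)_{t=0}^T, (S_t)_{t=0}^T, a_t, s_t, v_t satisfy exactly the Corrective Frank-Wolfe iteration conditions: (i) if ⟨∇f(x_t), a_t − s_t⟩ ≥ ⟨∇f(x_t), x_t − v_t⟩, then either [drop step] f(x_{t+1}) ≤ f(x_t), S_{t+1} ⊆ S_t, and |S_{t+1}| < |S_t|, or [descent step] f(x_t) − f(x_{t+1}) ≥ ⟨∇f(x_t), a_t − s_t⟩² / (2 L D²) and S_{t+1} ⊆ S_t; (ii) otherwise x_{t+1} = x_t + γ_t (v_t − x_t) with γ_t an exact line-search minimizer over [0,1] and S_{t+1} = S_t ∪ {v_t}; where S_0 = {x_0} and x_t ∈ conv(S_t). Assume additionally there are constants c > 0 and δ > 0 such that for every t < T, (1/c) · (f(x_t) − f*)^{1/2} ≤ ⟨∇f(x_t), a_t − v_t⟩ /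 δ. Then f(x_T) − f* ≤ (f(x_0) − f*) · exp( − min{1/4, δ²/(16 L c² D²)} · T ). -/
open RealInnerProductSpace

private lemma cfw_grad_ineq {E : Type*} [NormedAddCommGroup E] [InnerProductSpace ℝ E]
    {f : E → ℝ} {g : E → E} (hconv : ConvexOn ℝ Set.univ f)
    (hdiff : ∀ p : E, HasFDerivAt f ((innerSL ℝ) (g p)) p) (p q : E) :
    f p + ⟪g p, q - p⟫ ≤ f q := by
  have hline : HasDerivAt (fun θ : ℝ => p + θ • (q - p)) (q - p) 0 := by
    simpa using ((hasDerivAt_id (0:ℝ)).smul_const (q - p)).const_add p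
  have hφ : HasDerivAt (fun θ : ℝ => f (p + θ • (q - p))) ⟪g p, q - p⟫ 0 := by
    have h0 : HasFDerivAt f ((innerSL ℝ) (g p)) (p + (0:ℝ) • (q - p)) := by
      simpa using hdiff p
    simpa [Function.comp_def] using h0.comp_hasDerivAt 0 hline
  have hslope := hasDerivAt_iff_tendsto_slope.mp hφ
  have hslope' : Filter.Tendsto (slope (fun θ : ℝ => f (p + θ • (q - p))) 0)
      (nhdsWithin 0 (Set.Ioi 0)) (nhds ⟪g p, q - p⟫) :=
    hslope.mono_left (nhdsWithin_mono 0 (fun θ hθ => ne_of_gt hθ))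
  have hle : ⟪g p, q - p⟫ ≤ f q - f p := by
    refine le_of_tendsto hslope' ?_
    filter_upwards [Ioc_mem_nhdsGT (zero_lt_one)] with θ hθ
    have hθ0 : (0:ℝ) < θ := hθ.1
    have hcomb : p + θ • (q - p) = (1 - θ) • p + θ • q := by
      rw [smul_sub, sub_smul, one_smul]; abel
    have hcx := hconv.2 (Set.mem_univ p) (Set.mem_univ q)
      (by linarith [hθ.2] : (0:ℝ) ≤ 1 - θ) (le_of_lt hθ0) (by ring)
    rw [← hcomb] at hcx
    rw [slope_def_field]
    simp only [smul_zero, add_zero, sub_zero, zero_smul] at hcx ⊢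
    rw [div_le_iff₀ hθ0]
    simp only [smul_eq_mul] at hcx
    nlinarith
  linarith

private lemma cfw_hull_le {E : Type*} [NormedAddCommGroup E] [InnerProductSpace ℝ E]
    (G : E) (s : Set E) (b : ℝ) (hb : ∀ u ∈ s, b ≤ ⟪G, u⟫) {x : E}
    (hx : x ∈ convexHull ℝ s) : b ≤ ⟪G, x⟫ := by
  have hlin : IsLinearMap ℝ (fun w : E => ⟪G, w⟫) :=
    ⟨fun u w => inner_add_right G u w, fun r u => real_inner_smul_right G u r⟩
  exact convexHull_min hb (convex_halfSpace_ge hlin b) hx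

private lemma cfw_hull_ge {E : Type*} [NormedAddCommGroup E] [InnerProductSpace ℝ E]
    (G : E) (s : Set E) (b : ℝ) (hb : ∀ u ∈ s, ⟪G, u⟫ ≤ b) {x : E}
    (hx : x ∈ convexHull ℝ s) : ⟪G, x⟫ ≤ b := by
  have hlin : IsLinearMap ℝ (fun w : E => ⟪G, w⟫) :=
    ⟨fun u w => inner_add_right G u w, fun r u => real_inner_smul_right G u r⟩
  exact convexHull_min hb (convex_halfSpace_le hlin b) hx


private lemma cfw_quad (L D gp fv : ℝ) (hL : 0 < L) (hD : 0 < D) :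
    fv - gp/(L*D^2)*gp + L/2*(gp/(L*D^2))^2*D^2 = fv - gp^2/(2*L*D^2) := by
  field_simp
  ring

private lemma cfw_core (L D c δ h Q dec : ℝ) (hL : 0 < L) (hD : 0 < D) (hc : 0 < c)
    (hδ : 0 < δ) (hh : 0 ≤ h) (hsq : δ * Real.sqrt h ≤ 2*c*Q)
    (hdec : Q^2/(2*L*D^2) ≤ dec) :
    min (1/2) (δ^2/(8*L*c^2*D^2)) * h ≤ dec := by
  have hs0 : 0 ≤ Real.sqrt h := Real.sqrt_nonneg h
  have hQ0 : 0 ≤ Q := by nlinarith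
  have hKsq : (δ * Real.sqrt h)^2 = δ^2 * h := by
    rw [mul_pow, Real.sq_sqrt hh]
  have hQ2 : δ^2 * h ≤ 4*c^2*Q^2 := by
    nlinarith [mul_le_mul hsq hsq (by positivity) (by positivity : (0:ℝ) ≤ 2*c*Q)]
  have h2 : δ^2/(8*L*c^2*D^2) * h ≤ Q^2/(2*L*D^2) := by
    rw [div_mul_eq_mul_div, div_le_div_iff₀ (by positivity) (by positivity)]
    nlinarith [mul_le_mul_of_nonneg_right hQ2 (show (0:ℝ) ≤ 2*L*D^2 by positivity)]
  calc min (1/2) (δ^2/(8*L*c^2*D^2)) * h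
      ≤ δ^2/(8*L*c^2*D^2) * h := mul_le_mul_of_nonneg_right (min_le_right _ _) hh
    _ ≤ Q^2/(2*L*D^2) := h2
    _ ≤ dec := hdec

set_option maxHeartbeats 1000000 in
/-- Linear convergence of the Corrective Frank-Wolfe algorithm under the geometric sharpness
estimate `(1/c)·(f (x t) - f*)^(1/2) ≤ ⟪∇f (x t), a t - v t⟫ / δ`:
`f (x T) - f* ≤ (f (x 0) - f*)·exp(-min{1/4, δ²/(16Lc²D²)}·T)`. -/
theorem corrective_frank_wolfe_linear
    {E : Type*} [NormedAddCommGroup E] [InnerProductSpace ℝ E] [FiniteDimensional ℝ E]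
    [DecidableEq E]
    (X : Set E) (hXcomp : IsCompact X) (hXconv : Convex ℝ X)
    (D L : ℝ) (hD : 0 < D) (hL : 0 < L)
    (hdiam : ∀ p ∈ X, ∀ q ∈ X, ‖p - q‖ ≤ D)
    (f : E → ℝ) (g : E → E)
    (hconv : ConvexOn ℝ Set.univ f)
    (hdiff : ∀ p : E, HasFDerivAt f ((innerSL ℝ) (g p)) p)
    (hsmooth : ∀ p ∈ X, ∀ q ∈ X, f q - f p ≤ ⟪g p, q - p⟫ + L / 2 * ‖q - p‖ ^ 2)
    (T : ℕ) (hT : 1 ≤ T)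
    (x : ℕ → E) (S : ℕ → Finset E) (a s v : ℕ → E)
    (hxX : ∀ t ≤ T, x t ∈ X)
    (hSX : ∀ t ≤ T, (S t : Set E) ⊆ X)
    (hS0 : S 0 = {x 0})
    (hxconv : ∀ t ≤ T, x t ∈ convexHull ℝ (S t : Set E))
    (ha : ∀ t < T, a t ∈ S t ∧ ∀ u ∈ S t, ⟪g (x t), u⟫ ≤ ⟪g (x t), a t⟫)
    (hs : ∀ t < T, s t ∈ S t ∧ ∀ u ∈ S t, ⟪g (x t), s t⟫ ≤ ⟪g (x t), u⟫)
    (hv : ∀ t < T, v t ∈ X ∧ ∀ u ∈ X, ⟪g (x t), v t⟫ ≤ ⟪g (x t), u⟫)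
    (hcorrective : ∀ t < T, ⟪g (x t), a t - s t⟫ ≥ ⟪g (x t), x t - v t⟫ →
      ((f (x (t + 1)) ≤ f (x t) ∧ S (t + 1) ⊆ S t ∧ (S (t + 1)).card < (S t).card) ∨
       (f (x t) - f (x (t + 1)) ≥ ⟪g (x t), a t - s t⟫ ^ 2 / (2 * L * D ^ 2) ∧
         S (t + 1) ⊆ S t)))
    (hfw : ∀ t < T, ¬(⟪g (x t), a t - s t⟫ ≥ ⟪g (x t), x t - v t⟫) →
      ∃ γ ∈ Set.Icc (0:ℝ) 1,
        x (t + 1) = x t + γ • (v t - x t) ∧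
        (∀ γ' ∈ Set.Icc (0:ℝ) 1, f (x (t + 1)) ≤ f (x t + γ' • (v t - x t))) ∧
        S (t + 1) = insert (v t) (S t))
    (xm : E) (hxm : xm ∈ X) (hxmin : ∀ y ∈ X, f xm ≤ f y)
    (c δ : ℝ) (hc : 0 < c) (hδ : 0 < δ)
    (hsharp : ∀ t < T,
      (1 / c) * Real.sqrt (f (x t) - f xm) ≤ ⟪g (x t), a t - v t⟫ / δ) :
    f (x T) - f xm ≤
      (f (x 0) - f xm) *
        Real.exp (-(min (1 / 4) (δ ^ 2 / (16 * L * c ^ 2 * D ^ 2))) * T) := by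
  set r : ℝ := min (1/2) (δ^2/(8*L*c^2*D^2)) with hrdef
  have hrpos : 0 < r := lt_min (by norm_num) (by positivity)
  have hrhalf : r ≤ 1/2 := min_le_left _ _
  have hr1 : 0 ≤ 1 - r := by linarith
  have h0nonneg : 0 ≤ f (x 0) - f xm := sub_nonneg.mpr (hxmin _ (hxX 0 (by omega)))
  -- per-step contraction
  have key : ∀ t, t < T →
      (f (x (t+1)) - f xm ≤ (1 - r) * (f (x t) - f xm) ∧ (S (t+1)).card ≤ (S t).card + 1) ∨
      (f (x (t+1)) - f xm ≤ f (x t) - f xm ∧ (S (t+1)).card < (S t).card) := by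
    intro t htT
    have hxt : x t ∈ X := hxX t (le_of_lt htT)
    have hvt := hv t htT
    have hat := ha t htT
    have hst := hs t htT
    have hht : 0 ≤ f (x t) - f xm := sub_nonneg.mpr (hxmin _ hxt)
    have e2 : ⟪g (x t), x t - v t⟫ = ⟪g (x t), x t⟫ - ⟪g (x t), v t⟫ :=
      inner_sub_right _ _ _
    have e3 : ⟪g (x t), a t - s t⟫ = ⟪g (x t), a t⟫ - ⟪g (x t), s t⟫ :=
      inner_sub_right _ _ _
    have e4 : ⟪g (x t), a t - v t⟫ = ⟪g (x t), a t⟫ - ⟪g (x t), v t⟫ :=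
      inner_sub_right _ _ _
    have hgi := cfw_grad_ineq hconv hdiff (x t) xm
    have e1 : ⟪g (x t), xm - x t⟫ = ⟪g (x t), xm⟫ - ⟪g (x t), x t⟫ :=
      inner_sub_right _ _ _
    have hvmin : ⟪g (x t), v t⟫ ≤ ⟪g (x t), xm⟫ := hvt.2 xm hxm
    have hgap : f (x t) - f xm ≤ ⟪g (x t), x t⟫ - ⟪g (x t), v t⟫ := by
      rw [e1] at hgi; linarith
    have hsx : ⟪g (x t), s t⟫ ≤ ⟪g (x t), x t⟫ :=
      cfw_hull_le (g (x t)) (S t : Set E) _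
        (fun u hu => hst.2 u (Finset.mem_coe.mp hu)) (hxconv t (le_of_lt htT))
    have hxa : ⟪g (x t), x t⟫ ≤ ⟪g (x t), a t⟫ :=
      cfw_hull_ge (g (x t)) (S t : Set E) _
        (fun u hu => hat.2 u (Finset.mem_coe.mp hu)) (hxconv t (le_of_lt htT))
    have hsqnn : 0 ≤ Real.sqrt (f (x t) - f xm) := Real.sqrt_nonneg _
    -- sharpness in multiplied-out form
    have hsharpK : δ * Real.sqrt (f (x t) - f xm) ≤
        c * (⟪g (x t), a t⟫ - ⟪g (x t), v t⟫) := by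
      have h1 : 1/c * Real.sqrt (f (x t) - f xm) * δ ≤ ⟪g (x t), a t - v t⟫ :=
        (le_div_iff₀ hδ).mp (hsharp t htT)
      rw [e4] at h1
      have h2 : δ * Real.sqrt (f (x t) - f xm) / c ≤
          ⟪g (x t), a t⟫ - ⟪g (x t), v t⟫ := by
        calc δ * Real.sqrt (f (x t) - f xm) / c
            = 1/c * Real.sqrt (f (x t) - f xm) * δ := by ring
          _ ≤ _ := h1
      have h3 := (div_le_iff₀ hc).mp h2
      linarith [h3]
    by_cases hcase : ⟪g (x t), a t - s t⟫ ≥ ⟪g (x t), x t - v t⟫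
    · rcases hcorrective t htT hcase with ⟨hdrop1, _, hdrop3⟩ | ⟨hdesc, hsub⟩
      · right; exact ⟨by linarith, hdrop3⟩
      · left
        refine ⟨?_, le_trans (Finset.card_le_card hsub) (Nat.le_succ _)⟩
        -- 2·⟪g,a-s⟫ ≥ ⟪g,a⟫-⟪g,v⟫
        have hA : δ * Real.sqrt (f (x t) - f xm) ≤ 2 * c * ⟪g (x t), a t - s t⟫ := by
          rw [e2, e3] at hcase
          have hAv : ⟪g (x t), a t⟫ - ⟪g (x t), v t⟫ ≤ 2 * ⟪g (x t), a t - s t⟫ := by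
            rw [e3]; linarith
          calc δ * Real.sqrt (f (x t) - f xm)
              ≤ c * (⟪g (x t), a t⟫ - ⟪g (x t), v t⟫) := hsharpK
            _ ≤ c * (2 * ⟪g (x t), a t - s t⟫) := mul_le_mul_of_nonneg_left hAv hc.le
            _ = 2 * c * ⟪g (x t), a t - s t⟫ := by ring
        have hcore := cfw_core L D c δ (f (x t) - f xm) (⟪g (x t), a t - s t⟫)
          (f (x t) - f (x (t+1))) hL hD hc hδ hht hA hdesc
        linarith
    · obtain ⟨γ, hγmem, hxeq, hls, hSeq⟩ := hfw t htT hcase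
      push_neg at hcase
      left
      refine ⟨?_, by rw [hSeq]; exact Finset.card_insert_le _ _⟩
      have hgp0 : 0 < ⟪g (x t), x t - v t⟫ := by
        rw [e2]; rw [e2, e3] at hcase; linarith
      have hstep : ∀ γ' : ℝ, γ' ∈ Set.Icc (0:ℝ) 1 →
          f (x (t+1)) ≤ f (x t) - γ' * ⟪g (x t), x t - v t⟫ + L/2 * γ'^2 * D^2 := by
        intro γ' hγ'
        have hq : x t + γ' • (v t - x t) ∈ X :=
          hXconv.add_smul_sub_mem hxt hvt.1 hγ'
        have hsm := hsmooth (x t) hxt _ hq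
        have hsub1 : x t + γ' • (v t - x t) - x t = γ' • (v t - x t) := by abel
        rw [hsub1] at hsm
        have hin : ⟪g (x t), γ' • (v t - x t)⟫ = -(γ' * ⟪g (x t), x t - v t⟫) := by
          rw [real_inner_smul_right, e2, inner_sub_right]; ring
        have hnorm : ‖γ' • (v t - x t)‖^2 ≤ γ'^2 * D^2 := by
          rw [norm_smul, mul_pow]
          have h1 : ‖v t - x t‖ ≤ D := hdiam _ hvt.1 _ hxt
          have h2 : ‖v t - x t‖^2 ≤ D^2 := pow_le_pow_left₀ (norm_nonneg _) h1 2
          have h3 : ‖γ'‖^2 = γ'^2 := by rw [Real.norm_eq_abs, sq_abs]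
          rw [h3]
          exact mul_le_mul_of_nonneg_left h2 (sq_nonneg _)
        rw [hin] at hsm
        have hls' := hls γ' hγ'
        have h5 : L/2 * ‖γ' • (v t - x t)‖^2 ≤ L/2 * (γ'^2 * D^2) :=
          mul_le_mul_of_nonneg_left hnorm (by positivity)
        linarith
      have hAv2 : δ * Real.sqrt (f (x t) - f xm) ≤ 2 * c * ⟪g (x t), x t - v t⟫ := by
        rw [e2, e3] at hcase
        have hAv : ⟪g (x t), a t⟫ - ⟪g (x t), v t⟫ ≤ 2 * ⟪g (x t), x t - v t⟫ := by
          rw [e2]; linarith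
        calc δ * Real.sqrt (f (x t) - f xm)
            ≤ c * (⟪g (x t), a t⟫ - ⟪g (x t), v t⟫) := hsharpK
          _ ≤ c * (2 * ⟪g (x t), x t - v t⟫) := mul_le_mul_of_nonneg_left hAv hc.le
          _ = 2 * c * ⟪g (x t), x t - v t⟫ := by ring
      rcases le_or_gt ⟪g (x t), x t - v t⟫ (L*D^2) with hsmall | hbig
      · have hLD : (0:ℝ) < L*D^2 := by positivity
        have hγ0 : ⟪g (x t), x t - v t⟫/(L*D^2) ∈ Set.Icc (0:ℝ) 1 :=
          ⟨by positivity, (div_le_one hLD).mpr hsmall⟩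
        have hval0 := hstep _ hγ0
        rw [cfw_quad L D ⟪g (x t), x t - v t⟫ (f (x t)) hL hD] at hval0
        have hdec : ⟪g (x t), x t - v t⟫^2/(2*L*D^2) ≤ f (x t) - f (x (t+1)) := by
          linarith
        have hcore := cfw_core L D c δ (f (x t) - f xm) (⟪g (x t), x t - v t⟫)
          (f (x t) - f (x (t+1))) hL hD hc hδ hht hAv2 hdec
        linarith
      · have hval := hstep 1 ⟨zero_le_one, le_rfl⟩
        have hrh2 : r * (f (x t) - f xm) ≤ (f (x t) - f xm)/2 := by nlinarith
        have hgap2 : f (x t) - f xm ≤ ⟪g (x t), x t - v t⟫ := by rw [e2]; exact hgap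
        nlinarith
  -- inductive invariant
  have main : ∀ t, t ≤ T → ∃ n : ℕ,
      f (x t) - f xm ≤ (f (x 0) - f xm) * (1-r)^n ∧ t + (S t).card ≤ 2*n + 1 := by
    intro t
    induction t with
    | zero => intro _; exact ⟨0, by simp, by simp [hS0]⟩
    | succ t ih =>
      intro h1
      obtain ⟨n, hn1, hn2⟩ := ih (by omega)
      rcases key t (by omega) with ⟨hf, hcard⟩ | ⟨hf, hcard⟩
      · refine ⟨n+1, ?_, by omega⟩
        calc f (x (t+1)) - f xm ≤ (1-r) * (f (x t) - f xm) := hf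
          _ ≤ (1-r) * ((f (x 0) - f xm) * (1-r)^n) :=
              mul_le_mul_of_nonneg_left hn1 hr1
          _ = (f (x 0) - f xm) * (1-r)^(n+1) := by ring
      · exact ⟨n, le_trans hf hn1, by omega⟩
  obtain ⟨n, hn1, hn2⟩ := main T le_rfl
  have hSTne : (S T).Nonempty := by
    rcases Finset.eq_empty_or_nonempty (S T) with h | h
    · exfalso
      have := hxconv T le_rfl
      rw [h] at this
      simp at this
    · exact h
  have hcard1 : 1 ≤ (S T).card := Finset.card_pos.mpr hSTne
  have hTn : T ≤ 2 * n := by omega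
  have hhalf : δ^2/(16*L*c^2*D^2) = (δ^2/(8*L*c^2*D^2))/2 := by
    rw [div_div]
    congr 1
    ring
  have hmin : min (1/4 : ℝ) (δ^2/(16*L*c^2*D^2)) = r/2 := by
    rw [hrdef, hhalf]
    rcases le_total ((1:ℝ)/2) (δ^2/(8*L*c^2*D^2)) with h | h
    · rw [min_eq_left h, min_eq_left (by linarith : (1:ℝ)/4 ≤ δ^2/(8*L*c^2*D^2)/2)]
      norm_num
    · rw [min_eq_right h, min_eq_right (by linarith : δ^2/(8*L*c^2*D^2)/2 ≤ (1:ℝ)/4)]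
  have hpow : (1-r)^n ≤ Real.exp (-(r/2) * T) := by
    have h1 : (1-r) ≤ Real.exp (-r) := by
      have := Real.add_one_le_exp (-r)
      linarith
    have h2 : (1-r)^n ≤ Real.exp (-r)^n := pow_le_pow_left₀ hr1 h1 n
    rw [← Real.exp_nat_mul] at h2
    refine le_trans h2 (Real.exp_le_exp.mpr ?_)
    have hTn' : (T:ℝ) ≤ 2 * n := by exact_mod_cast hTn
    nlinarith [hrpos]
  calc f (x T) - f xm ≤ (f (x 0) - f xm) * (1-r)^n := hn1
    _ ≤ (f (x 0) - f xm) * Real.exp (-(r/2) * T) :=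
        mul_le_mul_of_nonneg_left hpow h0nonneg
    _ = (f (x 0) - f xm) * Real.exp (-(min (1/4) (δ^2/(16*L*c^2*D^2))) * T) := by
        rw [hmin]
end

section
/- For every real t ≥ 0, (√(t+2)·ln(t+2) − 1) · √(t+3)·ln(t+3) ≤ (t+2)·(ln(t+2))²; equivalently, (√(t+2)·ln(t+2) − 1) / ((t+2)·(ln(t+2))²) ≤ 1 / (√(t+3)·ln(t+3)). -/
lemma scg_aux_hasDeriv (x : ℝ) (hx : 0 < x) :
    HasDerivAt (fun y => Real.sqrt y * Real.log y - y)
      ((Real.log x + 2) / (2 * Real.sqrt x) - 1) x := by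
  have hs : 0 < Real.sqrt x := Real.sqrt_pos.mpr hx
  have h1 : HasDerivAt Real.sqrt (1 / (2 * Real.sqrt x)) x := Real.hasDerivAt_sqrt hx.ne'
  have h2 : HasDerivAt Real.log (1 / x) x := by
    simpa using Real.hasDerivAt_log hx.ne'
  have h3 := (h1.mul h2).sub (hasDerivAt_id x)
  refine (h3 : HasDerivAt (fun y => Real.sqrt y * Real.log y - y) _ x).congr_deriv ?_
  have hss : Real.sqrt x * Real.sqrt x = x := Real.mul_self_sqrt hx.le
  field_simp
  nlinarith [hss]

lemma scg_aux_anti :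
    AntitoneOn (fun y => Real.sqrt y * Real.log y - y) (Set.Ici (1 : ℝ)) := by
  apply antitoneOn_of_deriv_nonpos (convex_Ici 1)
  · exact ((Real.continuous_sqrt.continuousOn.mul
      (Real.continuousOn_log.mono (by intro x hx; simp at hx ⊢; linarith))).sub
      continuousOn_id)
  · intro x hx
    rw [interior_Ici] at hx
    have hx0 : (0 : ℝ) < x := by linarith [Set.mem_Ioi.mp hx]
    exact ((scg_aux_hasDeriv x hx0).differentiableAt.differentiableWithinAt)
  · intro x hx
    rw [interior_Ici] at hx
    have hx1 : (1 : ℝ) < x := hx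
    have hx0 : (0 : ℝ) < x := by linarith
    have hs : 0 < Real.sqrt x := Real.sqrt_pos.mpr hx0
    rw [(scg_aux_hasDeriv x hx0).deriv]
    have hlog : Real.log x ≤ 2 * Real.sqrt x - 2 := by
      have h := Real.log_le_sub_one_of_pos hs
      have : Real.log (Real.sqrt x) = Real.log x / 2 := Real.log_sqrt hx0.le
      linarith
    have : (Real.log x + 2) / (2 * Real.sqrt x) ≤ 1 := by
      rw [div_le_one (by linarith)]
      linarith
    linarith

lemma scg_aux_step (t : ℝ) (ht : 0 ≤ t) :
    Real.sqrt (t + 2) * Real.log (t + 2) - 1 ≤ Real.sqrt (t + 1) * Real.log (t + 1) := by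
  have h := scg_aux_anti (Set.mem_Ici.mpr (by linarith : (1:ℝ) ≤ t + 1))
    (Set.mem_Ici.mpr (by linarith : (1:ℝ) ≤ t + 2)) (by linarith)
  simp only at h
  linarith

/-- For every real `t ≥ 0`,
`(√(t+2)·ln(t+2) − 1)·√(t+3)·ln(t+3) ≤ (t+2)·(ln(t+2))²`; equivalently,
`(√(t+2)·ln(t+2) − 1)/((t+2)·(ln(t+2))²) ≤ 1/(√(t+3)·ln(t+3))`. -/
theorem scg_induction_key_inequality (t : ℝ) (ht : 0 ≤ t) :
    (Real.sqrt (t + 2) * Real.log (t + 2) - 1) * (Real.sqrt (t + 3) * Real.log (t + 3)) ≤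
        (t + 2) * Real.log (t + 2) ^ 2 ∧
      (Real.sqrt (t + 2) * Real.log (t + 2) - 1) / ((t + 2) * Real.log (t + 2) ^ 2) ≤
        1 / (Real.sqrt (t + 3) * Real.log (t + 3)) := by
  have h1 : (0:ℝ) < t + 1 := by linarith
  have h2 : (0:ℝ) < t + 2 := by linarith
  have h3 : (0:ℝ) < t + 3 := by linarith
  set L1 := Real.log (t + 1) with hL1
  set L2 := Real.log (t + 2) with hL2
  set L3 := Real.log (t + 3) with hL3
  have hL1n : 0 ≤ L1 := Real.log_nonneg (by linarith)
  have hL2p : 0 < L2 := Real.log_pos (by linarith)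
  have hL3p : 0 < L3 := Real.log_pos (by linarith)
  have hs1 : 0 ≤ Real.sqrt (t + 1) := Real.sqrt_nonneg _
  have hs3 : 0 < Real.sqrt (t + 3) := Real.sqrt_pos.mpr h3
  -- √(t+1)·√(t+3) ≤ t+2
  have hsprod : Real.sqrt (t + 1) * Real.sqrt (t + 3) ≤ t + 2 := by
    rw [← Real.sqrt_mul h1.le]
    calc Real.sqrt ((t + 1) * (t + 3)) ≤ Real.sqrt ((t + 2) ^ 2) :=
          Real.sqrt_le_sqrt (by nlinarith)
      _ = t + 2 := Real.sqrt_sq h2.le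
  -- L1 + L3 ≤ 2 L2
  have hlsum : L1 + L3 ≤ 2 * L2 := by
    have e1 : L1 + L3 = Real.log ((t + 1) * (t + 3)) := (Real.log_mul h1.ne' h3.ne').symm
    have e2 : 2 * L2 = Real.log ((t + 2) ^ 2) := by
      rw [Real.log_pow]; push_cast; ring
    rw [e1, e2]
    exact Real.log_le_log (by positivity) (by nlinarith)
  have hlmul : L1 * L3 ≤ L2 ^ 2 := by nlinarith [sq_nonneg (L1 - L3), hL3p.le]
  have hstep := scg_aux_step t ht
  have key : (Real.sqrt (t + 2) * L2 - 1) * (Real.sqrt (t + 3) * L3) ≤ (t + 2) * L2 ^ 2 := by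
    have hb : 0 ≤ Real.sqrt (t + 3) * L3 := by positivity
    calc (Real.sqrt (t + 2) * L2 - 1) * (Real.sqrt (t + 3) * L3)
        ≤ (Real.sqrt (t + 1) * L1) * (Real.sqrt (t + 3) * L3) :=
          mul_le_mul_of_nonneg_right hstep hb
      _ = (Real.sqrt (t + 1) * Real.sqrt (t + 3)) * (L1 * L3) := by ring
      _ ≤ (t + 2) * L2 ^ 2 := by
          have hll : 0 ≤ L1 * L3 := mul_nonneg hL1n hL3p.le
          nlinarith [mul_nonneg hs1 hs3.le]
  refine ⟨key, ?_⟩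
  rw [div_le_div_iff₀ (by positivity) (by positivity)]
  linarith
end

section
/- Let E be a real inner product space, let f : E → ℝ be convex, differentiable, and L-smooth on E (L > 0), let X ⊆ E be a compact convex set of diameter at most D > 0, and let f* = min_{y∈X} f(y). Let x ∈ X, let v ∈ X minimize y ↦ ⟨∇f(x), y⟩ over X, and suppose a, s ∈ X satisfy ⟨∇f(x), a − s⟩ ≥ ⟨∇f(x), x − v⟩ (the corrective-step condition). Then any point x' with f(x) − f(x') ≥ ⟨∇f(x), a − s⟩² / (2 L D²) satisfies f(x) − f(x') ≥ (f(x) − f*)² / (2 L D²). -/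
open RealInnerProductSpace

/-- Gradient inequality for a convex differentiable function. -/
lemma grad_ineq_aux {E : Type*} [NormedAddCommGroup E] [InnerProductSpace ℝ E]
    (f : E → ℝ) (g : E → E) (hconv : ConvexOn ℝ Set.univ f)
    (hdiff : ∀ p : E, HasFDerivAt f ((innerSL ℝ) (g p)) p)
    (x y : E) : f x + ⟪g x, y - x⟫ ≤ f y := by
  set φ : ℝ → ℝ := fun t => f (x + t • (y - x)) with hφ
  have hφconv : ConvexOn ℝ Set.univ φ := by
    have : ConvexOn ℝ ((fun t : ℝ => x + t • (y - x)) ⁻¹' Set.univ)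
        (f ∘ fun t : ℝ => x + t • (y - x)) := by
      have haff : ∀ t : ℝ, x + t • (y - x) = (AffineMap.lineMap x y : ℝ →ᵃ[ℝ] E) t := by
        intro t; simp [AffineMap.lineMap_apply]; module
      have := hconv.comp_affineMap (AffineMap.lineMap x y : ℝ →ᵃ[ℝ] E)
      simpa [Function.comp, haff, Set.preimage_univ] using this
    exact this
  have hder : HasDerivAt φ ⟪g x, y - x⟫ 0 := by
    have hline : HasDerivAt (fun t : ℝ => x + t • (y - x)) (y - x) 0 := by
      simpa using ((hasDerivAt_id (0:ℝ)).smul_const (y - x)).const_add x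
    have := (hdiff (x + (0:ℝ) • (y - x))).comp_hasDerivAt 0 hline
    rw [zero_smul, add_zero] at this
    exact this
  have hslope := hφconv.le_slope_of_hasDerivAt (Set.mem_univ (0:ℝ)) (Set.mem_univ (1:ℝ))
    one_pos hder
  have : ⟪g x, y - x⟫ ≤ φ 1 - φ 0 := by
    simpa [slope_def_field] using hslope
  simp only [hφ] at this; simp at this; linarith

/-- Descent-step progress bound in the Corrective Frank-Wolfe convergence proof: under the
corrective-step condition `⟪∇f x, a - s⟫ ≥ ⟪∇f x, x - v⟫` with `v` a Frank-Wolfe vertex,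
any point `x'` achieving progress `⟪∇f x, a - s⟫²/(2LD²)` also achieves progress at least
`(f x - f*)²/(2LD²)`. -/
theorem descent_step_primal_progress
    {E : Type*} [NormedAddCommGroup E] [InnerProductSpace ℝ E]
    (f : E → ℝ) (g : E → E) (L : ℝ) (hL : 0 < L)
    (hconv : ConvexOn ℝ Set.univ f)
    (hdiff : ∀ p : E, HasFDerivAt f ((innerSL ℝ) (g p)) p)
    (X : Set E) (hXcomp : IsCompact X) (hXconv : Convex ℝ X)
    (D : ℝ) (hD : 0 < D) (hdiam : ∀ p ∈ X, ∀ q ∈ X, ‖p - q‖ ≤ D)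
    (hsmooth : ∀ p ∈ X, ∀ q ∈ X, f q - f p ≤ ⟪g p, q - p⟫ + L / 2 * ‖q - p‖ ^ 2)
    (xm : E) (hxm : xm ∈ X) (hmin : ∀ y ∈ X, f xm ≤ f y)
    (x : E) (hx : x ∈ X)
    (v : E) (hv : v ∈ X) (hvmin : ∀ y ∈ X, ⟪g x, v⟫ ≤ ⟪g x, y⟫)
    (a s : E) (ha : a ∈ X) (hs : s ∈ X)
    (hcond : ⟪g x, a - s⟫ ≥ ⟪g x, x - v⟫)
    (x' : E) (hx' : f x - f x' ≥ ⟪g x, a - s⟫ ^ 2 / (2 * L * D ^ 2)) :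
    f x - f x' ≥ (f x - f xm) ^ 2 / (2 * L * D ^ 2) := by
  have hgap : f x - f xm ≤ ⟪g x, x - xm⟫ := by
    have := grad_ineq_aux f g hconv hdiff x xm
    rw [inner_sub_right] at this ⊢
    linarith [this]
  have h2 : ⟪g x, x - xm⟫ ≤ ⟪g x, x - v⟫ := by
    rw [inner_sub_right, inner_sub_right]
    linarith [hvmin xm hxm]
  have hnn : (0:ℝ) ≤ f x - f xm := by linarith [hmin x hx]
  have hsq : (f x - f xm) ^ 2 ≤ ⟪g x, a - s⟫ ^ 2 := by
    have h3 : f x - f xm ≤ ⟪g x, a - s⟫ := by linarith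
    exact pow_le_pow_left₀ hnn h3 2
  have hden : (0:ℝ) < 2 * L * D ^ 2 := by positivity
  calc (f x - f xm) ^ 2 / (2 * L * D ^ 2)
      ≤ ⟪g x, a - s⟫ ^ 2 / (2 * L * D ^ 2) := by
        exact div_le_div_of_nonneg_right hsq hden.le
    _ ≤ f x - f x' := hx'
end
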